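/- arXiv:2008.05227 — 3 statements merged into one kernel-verified Lean document; each statement's English description precedes it below -/
import Mathlib

section
/- Let X be a complex Banach space and F : ℂ → X a 1-periodic function on the real line that is analytic and bounded by A in norm on the strip Ω_a = {z ∈ ℂ : −a < Im z < a} for some a > 0. Then for every N ∈ ℕ, ‖∫₀¹ F(x) dx − (1/N) Σ_{k=0}^{N−1} F(k/N)‖ ≤ 2A/(e^{aN} − 1). -/
open Complex Set MeasureTheory intervalIntegral Filter Real

lemma abs_mem_uIcc {s y : ℝ} (hy : y ∈ Set.uIcc 0 s) : |y| ≤ |s| := by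
  rw [Set.uIcc_eq_union] at hy
  rcases hy with h | h
  · rw [abs_le]; exact ⟨by linarith [h.1, abs_nonneg s], by linarith [h.2, le_abs_self s]⟩
  · rw [abs_le]; exact ⟨by linarith [h.1, neg_abs_le s], by linarith [h.2, abs_nonneg s]⟩

lemma integral_shift {g : ℂ → ℂ} {a : ℝ} (ha : 0 < a)
    (hd : DifferentiableOn ℂ g {z : ℂ | -a < z.im ∧ z.im < a})
    (hp : ∀ z ∈ {z : ℂ | -a < z.im ∧ z.im < a}, g (z + 1) = g z)
    {s : ℝ} (hs : |s| < a) :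
    ∫ x in (0:ℝ)..1, g x = ∫ x in (0:ℝ)..1, g (x + s * I) := by
  have hsub : (Set.uIcc (0:ℂ).re (1+(s:ℂ)*I).re ×ℂ Set.uIcc (0:ℂ).im (1+(s:ℂ)*I).im)
      ⊆ {z : ℂ | -a < z.im ∧ z.im < a} := by
    intro z hz
    have him : z.im ∈ Set.uIcc (0:ℂ).im (1+(s:ℂ)*I).im := hz.2
    have h1 : (1+(s:ℂ)*I).im = s := by simp
    rw [h1] at him
    have h0 : (0:ℂ).im = 0 := rfl
    rw [h0] at him
    have hb := abs_mem_uIcc him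
    rw [abs_le] at hb
    exact ⟨by linarith [hb.1], by linarith [hb.2]⟩
  have h := Complex.integral_boundary_rect_eq_zero_of_differentiableOn g 0 (1 + (s:ℂ)*I)
    (hd.mono hsub)
  simp only [Complex.zero_re, Complex.zero_im, Complex.add_re, Complex.one_re,
    Complex.mul_re, Complex.ofReal_re, Complex.I_re, Complex.ofReal_im, Complex.I_im,
    Complex.add_im, Complex.one_im, Complex.mul_im] at h
  norm_num at h
  have hvert : (∫ y in (0:ℝ)..s, g (1 + y * I)) = ∫ y in (0:ℝ)..s, g (y * I) := by
    apply intervalIntegral.integral_congr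
    intro y hy
    have hb := abs_mem_uIcc hy
    rw [abs_le] at hb
    have hyS : (y:ℂ) * I ∈ {z : ℂ | -a < z.im ∧ z.im < a} := by
      simp only [Set.mem_setOf_eq, Complex.mul_im, Complex.ofReal_re, Complex.I_im,
        Complex.ofReal_im, Complex.I_re]
      constructor <;> [nlinarith [hb.1]; nlinarith [hb.2]]
    have := hp _ hyS
    rw [add_comm] at this
    simpa using this
  rw [hvert] at h
  linear_combination h

lemma strip_conv (a : ℝ) : Convex ℝ {z : ℂ | -a < z.im ∧ z.im < a} := by
  intro z hz w hw p q hp hq hpq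
  have h := (convex_Ioo (-a) a) (⟨hz.1, hz.2⟩ : z.im ∈ Set.Ioo (-a) a) ⟨hw.1, hw.2⟩ hp hq hpq
  exact ⟨by simpa [Complex.add_im, Complex.smul_im] using h.1,
    by simpa [Complex.add_im, Complex.smul_im] using h.2⟩

-- periodicity on strip
lemma per_strip {f : ℂ → ℂ} {a : ℝ} (ha : 0 < a)
    (hper : ∀ x : ℝ, f (x + 1) = f x)
    (han : DifferentiableOn ℂ f {z : ℂ | -a < z.im ∧ z.im < a}) :
    ∀ z ∈ {z : ℂ | -a < z.im ∧ z.im < a}, f (z + 1) = f z := by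
  set S := {z : ℂ | -a < z.im ∧ z.im < a} with hSdef
  have hSo : IsOpen S := by
    have : S = Complex.im ⁻¹' Set.Ioo (-a) a := rfl
    rw [this]; exact isOpen_Ioo.preimage Complex.continuous_im
  have hmap : ∀ z ∈ S, z + 1 ∈ S := by
    intro z hz; simpa [hSdef, Complex.add_im] using hz
  have hd : DifferentiableOn ℂ (fun z => f (z + 1) - f z) S := by
    refine DifferentiableOn.sub ?_ han
    exact han.comp ((differentiable_id.add_const 1).differentiableOn) hmap
  have han2 : AnalyticOnNhd ℂ (fun z => f (z + 1) - f z) S := hd.analyticOnNhd hSo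
  have h0 : (0 : ℂ) ∈ S := by simp [hSdef, ha]
  have hfreq : ∃ᶠ z in nhdsWithin (0:ℂ) {(0:ℂ)}ᶜ, f (z + 1) - f z = 0 := by
    have htend : Tendsto (fun n : ℕ => (((1:ℝ)/(n+1) : ℝ) : ℂ)) atTop (nhdsWithin 0 {(0:ℂ)}ᶜ) := by
      apply tendsto_nhdsWithin_of_tendsto_nhds_of_eventually_within
      · have : Tendsto (fun n : ℕ => (1:ℝ)/(n+1)) atTop (nhds 0) :=
          tendsto_one_div_add_atTop_nhds_zero_nat
        simpa [Function.comp_def, one_div] using (Complex.continuous_ofReal.tendsto 0).comp this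
      · filter_upwards with n
        simp only [Set.mem_compl_iff, Set.mem_singleton_iff]
        intro h
        have : (1:ℝ)/(n+1) = 0 := by exact_mod_cast h
        have : (0:ℝ) < 1/(n+1) := by positivity
        linarith
    refine htend.frequently (Frequently.of_forall fun n => ?_)
    rw [sub_eq_zero]
    exact hper _
  have := han2.eqOn_zero_of_preconnected_of_frequently_eq_zero
    ((strip_conv a).isPreconnected) h0 hfreq
  intro z hz
  have h2 := this hz
  simpa [sub_eq_zero] using h2

lemma key (f : ℂ → ℂ) (a A : ℝ) (ha : 0 < a)
    (hper : ∀ x : ℝ, f (x + 1) = f x)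
    (han : DifferentiableOn ℂ f {z : ℂ | -a < z.im ∧ z.im < a})
    (hbd : ∀ z ∈ {z : ℂ | -a < z.im ∧ z.im < a}, ‖f z‖ ≤ A)
    (N : ℕ) (hN : 0 < N) :
    ‖(∫ x in (0:ℝ)..1, f x) - (N : ℂ)⁻¹ • ∑ k ∈ Finset.range N, f ((k : ℝ) / N)‖ ≤
      2 * A / (Real.exp (a * N) - 1) := by
  have hgoal : ∀ k : ℕ, (((k:ℝ) : ℂ) / (N : ℂ)) = ((((k:ℝ)/(N:ℝ)) : ℝ) : ℂ) := by
    intro k; push_cast; ring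
  simp only [hgoal]
  haveI : Fact ((0:ℝ) < 1) := ⟨one_pos⟩
  set S := {z : ℂ | -a < z.im ∧ z.im < a} with hSdef
  have hSo : IsOpen S := by
    have : S = Complex.im ⁻¹' Set.Ioo (-a) a := rfl
    rw [this]; exact isOpen_Ioo.preimage Complex.continuous_im
  have hmemS : ∀ x : ℝ, (x : ℂ) ∈ S := fun x => by
    simp [hSdef, ha]
  have hp : ∀ z ∈ S, f (z + 1) = f z := per_strip ha hper han
  -- continuity on ℝ
  have hcont : Continuous fun x : ℝ => f x := by
    rw [continuous_iff_continuousAt]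
    intro x
    exact ((han.differentiableAt (hSo.mem_nhds (hmemS x))).continuousAt).comp
      Complex.continuous_ofReal.continuousAt
  have hf01 : f ((0:ℝ) : ℂ) = f ((1:ℝ) : ℂ) := by
    have := hper 0
    push_cast at this ⊢
    rw [← this]; norm_num
  -- the continuous map on the circle
  set g : C(AddCircle (1:ℝ), ℂ) := ⟨AddCircle.liftIco 1 0 (fun x : ℝ => f x),
    AddCircle.liftIco_zero_continuous hf01 hcont.continuousOn⟩ with hgdef
  have hg : ∀ x : ℝ, x ∈ Set.Ico (0:ℝ) 1 → g x = f x := fun x hx => by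
    show AddCircle.liftIco 1 0 (fun x : ℝ => f x) ↑x = f ↑x
    exact AddCircle.liftIco_zero_coe_apply hx
  -- Fourier coefficients as interval integrals
  have hcoeff : ∀ n : ℤ, fourierCoeff (⇑g) n
      = ∫ x in (0:ℝ)..1, Complex.exp (2 * π * Complex.I * (-n) * x) * f x := by
    intro n
    rw [fourierCoeff_eq_intervalIntegral (⇑g) n 0]
    norm_num
    apply intervalIntegral.integral_congr_ae
    have hae : ∀ᵐ x : ℝ ∂volume, x ≠ 1 := by
      simpa using (Set.countable_singleton (1:ℝ)).ae_notMem (μ := volume)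
    filter_upwards [hae] with x hx1 hxI
    rw [Set.uIoc_of_le (by norm_num : (0:ℝ) ≤ 1)] at hxI
    have hx : x ∈ Set.Ico (0:ℝ) 1 := ⟨hxI.1.le, lt_of_le_of_ne hxI.2 hx1⟩
    rw [hg x hx, ← Complex.exp_conj]
    congr 2
    simp only [map_mul, Complex.conj_I, Complex.conj_ofReal, map_intCast, map_ofNat]
    ring
  -- coefficient bound
  have hπ := Real.pi_gt_three
  set t : ℝ := a / (2 * π) with htdef
  have ht : 0 < t := by rw [htdef]; positivity
  have hta : t < a := by rw [htdef]; apply div_lt_self ha; linarith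
  have h2pt : 2 * π * t = a := by rw [htdef]; field_simp
  have hbound : ∀ n : ℤ, ‖fourierCoeff (⇑g) n‖ ≤ A * Real.exp (-(a * |(n:ℝ)|)) := by
    intro n
    set s : ℝ := if 0 ≤ n then -t else t with hsdef
    have hst : |s| = t := by
      rw [hsdef]; split_ifs <;> simp [abs_of_pos ht, abs_of_neg, neg_lt_zero, ht]
    have hsa : |s| < a := by rw [hst]; exact hta
    have hGd : DifferentiableOn ℂ (fun z => Complex.exp (2 * π * Complex.I * (-n) * z) * f z) S := by
      apply DifferentiableOn.mul _ han
      apply Differentiable.differentiableOn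
      apply Differentiable.cexp
      exact (differentiable_const _).mul differentiable_id
    have hGper : ∀ z ∈ S, (fun z => Complex.exp (2 * π * Complex.I * (-n) * z) * f z) (z + 1)
        = (fun z => Complex.exp (2 * π * Complex.I * (-n) * z) * f z) z := by
      intro z hz
      simp only
      rw [hp z hz, mul_add, Complex.exp_add]
      have h0 : (2*(π:ℂ)*Complex.I*(-(n:ℂ)) * 1) = ((-n : ℤ) : ℂ) * (2*π*Complex.I) := by
        push_cast; ring
      have h1 : Complex.exp (2*π*Complex.I*(-(n:ℂ)) * 1) = 1 := by
        rw [h0, Complex.exp_int_mul_two_pi_mul_I]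
      rw [h1, mul_one]
    have hshift := integral_shift ha hGd hGper hsa
    rw [hcoeff n, hshift]
    have hC : ∀ x ∈ Set.uIoc (0:ℝ) 1,
        ‖Complex.exp (2 * π * Complex.I * (-n) * (x + s*Complex.I)) * f (x + s*Complex.I)‖
          ≤ A * Real.exp (-(a * |(n:ℝ)|)) := by
      intro x hx
      rw [norm_mul]
      have hre : (2 * (π:ℂ) * Complex.I * (-(n:ℂ)) * (x + s*Complex.I)).re = 2*π*(n:ℝ)*s := by
        simp [Complex.mul_re, Complex.mul_im, Complex.add_re, Complex.add_im]
      have hnorm1 : ‖Complex.exp (2 * π * Complex.I * (-n) * (x + s*Complex.I))‖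
          = Real.exp (-(a * |(n:ℝ)|)) := by
        rw [Complex.norm_exp, hre]
        congr 1
        rw [hsdef]; split_ifs with hn
        · rw [_root_.abs_of_nonneg (by exact_mod_cast hn : (0:ℝ) ≤ (n:ℝ))]
          linear_combination (-(n:ℝ)) * h2pt
        · rw [_root_.abs_of_neg (by exact_mod_cast (not_le.mp hn) : (n:ℝ) < 0)]
          linear_combination (n:ℝ) * h2pt
      have hmem : (x:ℂ) + s*Complex.I ∈ S := by
        have : ((x:ℂ) + s*Complex.I).im = s := by simp
        constructor <;> rw [this] <;> [linarith [neg_abs_le s, hsa]; linarith [le_abs_self s, hsa]]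
      have hnf : ‖f ((x:ℂ) + s*Complex.I)‖ ≤ A := hbd _ hmem
      rw [hnorm1]
      calc Real.exp (-(a * |(n:ℝ)|)) * ‖f ((x:ℂ) + s*Complex.I)‖
          ≤ Real.exp (-(a * |(n:ℝ)|)) * A := by
            apply mul_le_mul_of_nonneg_left hnf (Real.exp_nonneg _)
        _ = A * Real.exp (-(a * |(n:ℝ)|)) := by ring
    have := intervalIntegral.norm_integral_le_of_norm_le_const hC
    simpa using this
  -- setup constants
  have hA : 0 ≤ A := le_trans (norm_nonneg _) (hbd 0 (by simpa using hmemS 0))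
  set q : ℝ := Real.exp (-(a * N)) with hqdef
  have hq0 : 0 < q := Real.exp_pos _
  have haN : 0 < a * N := by positivity
  have hq1 : q < 1 := by rw [hqdef, Real.exp_lt_one_iff]; linarith
  -- summability
  have hmaj : ∀ n : ℤ, A * Real.exp (-(a * |(n:ℝ)|)) = A * (Real.exp (-a)) ^ n.natAbs := by
    intro n
    rw [← Real.exp_nat_mul]
    congr 2
    have hcast : |(n:ℝ)| = (n.natAbs : ℝ) := by rw [Nat.cast_natAbs, Int.cast_abs]
    rw [hcast]; ring
  have hmajsum : Summable (fun n : ℤ => A * Real.exp (-(a * |(n:ℝ)|))) := by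
    rw [funext hmaj]
    apply Summable.mul_left
    have hea : Real.exp (-a) < 1 := by rw [Real.exp_lt_one_iff]; linarith
    apply Summable.of_nat_of_neg
    · simpa using summable_geometric_of_lt_one (Real.exp_nonneg _) hea
    · simpa using summable_geometric_of_lt_one (Real.exp_nonneg _) hea
  have hsumm : Summable (fourierCoeff (⇑g)) :=
    Summable.of_norm_bounded hmajsum hbound
  -- pointwise Fourier inversion at sample points
  have hps : ∀ k ∈ Finset.range N, HasSum
      (fun m : ℤ => fourierCoeff (⇑g) m • fourier m ((((k:ℝ)/N : ℝ)) : AddCircle (1:ℝ)))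
      (f (((k:ℝ)/N : ℝ) : ℂ)) := by
    intro k hk
    have hklt : (k:ℝ)/N < 1 := by
      rw [div_lt_one (by exact_mod_cast hN)]
      exact_mod_cast Finset.mem_range.mp hk
    have hx : ((k:ℝ)/N) ∈ Set.Ico (0:ℝ) 1 := ⟨by positivity, hklt⟩
    have := has_pointwise_sum_fourier_series_of_summable hsumm ((((k:ℝ)/N : ℝ)) : AddCircle (1:ℝ))
    rwa [hg _ hx] at this
  have hQ : HasSum (fun m : ℤ => (N:ℂ)⁻¹ • ∑ k ∈ Finset.range N,
        fourierCoeff (⇑g) m • fourier m ((((k:ℝ)/N : ℝ)) : AddCircle (1:ℝ)))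
      ((N:ℂ)⁻¹ • ∑ k ∈ Finset.range N, f (((k:ℝ)/N : ℝ) : ℂ)) :=
    (hasSum_sum hps).const_smul _
  -- evaluation of the inner sums
  have hNC : (N:ℂ) ≠ 0 := by exact_mod_cast hN.ne'
  have hterm : ∀ m : ℤ, (N:ℂ)⁻¹ • ∑ k ∈ Finset.range N,
        fourierCoeff (⇑g) m • fourier m ((((k:ℝ)/N : ℝ)) : AddCircle (1:ℝ))
      = if (N:ℤ) ∣ m then fourierCoeff (⇑g) m else 0 := by
    intro m
    have hfour : ∀ k : ℕ, (fourier m ((((k:ℝ)/N : ℝ)) : AddCircle (1:ℝ)) : ℂ)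
        = Complex.exp (2*π*Complex.I*m/N) ^ k := by
      intro k
      rw [fourier_coe_apply, ← Complex.exp_nat_mul]
      congr 1
      push_cast
      field_simp
    have hsum : ∑ k ∈ Finset.range N, (fourier m ((((k:ℝ)/N : ℝ)) : AddCircle (1:ℝ)) : ℂ)
        = if (N:ℤ) ∣ m then (N:ℂ) else 0 := by
      simp only [hfour]
      split_ifs with hdvd
      · obtain ⟨j, hj⟩ := hdvd
        have hω : Complex.exp (2*π*Complex.I*m/N) = 1 := by
          have : (2*(π:ℂ)*Complex.I*m/N) = (j : ℤ) * (2*π*Complex.I) := by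
            rw [hj]; push_cast; field_simp
          rw [this, Complex.exp_int_mul_two_pi_mul_I]
        simp [hω]
      · have hω1 : Complex.exp (2*π*Complex.I*m/N) ≠ 1 := by
          intro hc
          rw [Complex.exp_eq_one_iff] at hc
          obtain ⟨j, hj⟩ := hc
          apply hdvd
          refine ⟨j, ?_⟩
          have hIpi : (2*(π:ℂ)*Complex.I) ≠ 0 := by
            simp [Complex.I_ne_zero, Real.pi_ne_zero]
          have : (m : ℂ) = N * j := by
            field_simp at hj
            have h2 : (m:ℂ) * (2*(π:ℂ)*Complex.I) = ((N:ℂ) * j) * (2*(π:ℂ)*Complex.I) := by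
              ring_nf
              ring_nf at hj
              linear_combination (2*(π:ℂ)*Complex.I) * hj
            exact mul_right_cancel₀ hIpi h2
          exact_mod_cast this
        have hωN : Complex.exp (2*π*Complex.I*m/N) ^ N = 1 := by
          rw [← Complex.exp_nat_mul]
          have : (N:ℂ) * (2*π*Complex.I*m/N) = (m : ℤ) * (2*π*Complex.I) := by
            push_cast; field_simp
          rw [this, Complex.exp_int_mul_two_pi_mul_I]
        rw [geom_sum_eq hω1, hωN]
        simp
    rw [← Finset.smul_sum, hsum]
    split_ifs with h
    · simp only [smul_eq_mul]; field_simp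
    · simp
  simp only [hterm] at hQ
  set Q : ℂ := (N:ℂ)⁻¹ • ∑ k ∈ Finset.range N, f (((k:ℝ)/N : ℝ) : ℂ) with hQdef
  -- reindex over multiples of N
  have hNZ : (N:ℤ) ≠ 0 := by exact_mod_cast hN.ne'
  have hinj : Function.Injective (fun j : ℤ => j * N) := fun j1 j2 h => by
    have : j1 * (N:ℤ) = j2 * N := h
    exact mul_right_cancel₀ hNZ this
  have hvanish : ∀ m ∉ Set.range (fun j : ℤ => j * N),
      (if (N:ℤ) ∣ m then fourierCoeff (⇑g) m else 0) = 0 := by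
    intro m hm
    rw [if_neg]
    intro hdvd
    obtain ⟨j, hj⟩ := hdvd
    exact hm ⟨j, by rw [hj]; ring⟩
  have hQ3 := (hinj.hasSum_iff hvanish).mpr hQ
  have hQ4 : HasSum (fun j : ℤ => fourierCoeff (⇑g) (j * N)) Q := by
    have heq : ((fun m : ℤ => if (N:ℤ) ∣ m then fourierCoeff (⇑g) m else 0) ∘ (fun j : ℤ => j * N))
        = fun j : ℤ => fourierCoeff (⇑g) (j * N) := by
      funext j
      simp only [Function.comp_apply]
      rw [if_pos ⟨j, mul_comm j N⟩]
    rwa [heq] at hQ3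
  have hc0 : HasSum (fun j : ℤ => if j = 0 then fourierCoeff (⇑g) 0 else 0) (fourierCoeff (⇑g) 0) :=
    hasSum_ite_eq 0 _
  have hQ5 : HasSum (fun j : ℤ => if j = 0 then 0 else fourierCoeff (⇑g) (j * N))
      (Q - fourierCoeff (⇑g) 0) := by
    have hsub := hQ4.sub hc0
    have heq : (fun j : ℤ => fourierCoeff (⇑g) (j * N) - if j = 0 then fourierCoeff (⇑g) 0 else 0)
        = fun j : ℤ => if j = 0 then 0 else fourierCoeff (⇑g) (j * N) := by
      funext j
      split_ifs with h
      · subst h; simp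
      · simp
    rwa [heq] at hsub
  -- the value of the plain integral
  have hval : (∫ x in (0:ℝ)..1, f x) = fourierCoeff (⇑g) 0 := by
    rw [hcoeff 0]
    apply intervalIntegral.integral_congr
    intro x hx
    norm_num
  -- the geometric majorant
  set v : ℤ → ℝ := fun j => if j = 0 then (0:ℝ) else A * q ^ j.natAbs with hvdef
  have hgeo : HasSum (fun n : ℕ => A * q ^ (n+1)) (A * q / (1 - q)) := by
    have h := (hasSum_geometric_of_lt_one hq0.le hq1).mul_left (A * q)
    have heq : (fun n : ℕ => A * q * q ^ n) = fun n : ℕ => A * q ^ (n+1) := by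
      funext n; ring
    rw [heq] at h
    have hv : A * q / (1 - q) = A * q * (1 - q)⁻¹ := div_eq_mul_inv _ _
    rw [hv]
    exact h
  have h1 : HasSum (fun n : ℕ => v n) (A * q / (1 - q)) := by
    have heq : (fun n : ℕ => v (↑(n+1) : ℤ)) = fun n : ℕ => A * q ^ (n+1) := by
      funext n
      simp only [hvdef]
      rw [if_neg (by exact_mod_cast Nat.succ_ne_zero n)]
      have hna : ((n+1 : ℕ) : ℤ).natAbs = n+1 := by omega
      rw [hna]
    have h2 := (hasSum_nat_add_iff (f := fun n : ℕ => v n) 1).mp (by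
      have : (fun n : ℕ => v (↑(n+1) : ℤ)) = fun n : ℕ => v ↑(n+1) := rfl
      rw [heq]; exact hgeo)
    simpa [hvdef] using h2
  have h2 : HasSum (fun n : ℕ => v (-(↑n+1))) (A * q / (1 - q)) := by
    have heq : (fun n : ℕ => v (-(↑n+1))) = fun n : ℕ => A * q ^ (n+1) := by
      funext n
      simp only [hvdef]
      rw [if_neg (by omega)]
      have hna : (-((n:ℤ)+1)).natAbs = n+1 := by omega
      rw [hna]
    rw [heq]; exact hgeo
  have hvsum : HasSum v (A * q / (1 - q) + A * q / (1 - q)) := h1.of_nat_of_neg_add_one h2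
  -- norm comparison
  have hnorm_le : ∀ j : ℤ, ‖(if j = 0 then 0 else fourierCoeff (⇑g) (j * N))‖ ≤ v j := by
    intro j
    simp only [hvdef]
    split_ifs with h
    · simp
    · refine le_trans (hbound _) ?_
      have hqq : Real.exp (-(a * |((j*N : ℤ):ℝ)|)) = q ^ j.natAbs := by
        rw [hqdef, ← Real.exp_nat_mul]
        congr 1
        have habs : |((j*N : ℤ):ℝ)| = (j.natAbs : ℝ) * N := by
          rw [Nat.cast_natAbs, Int.cast_abs]
          push_cast
          rw [abs_mul, _root_.abs_of_nonneg (by positivity : (0:ℝ) ≤ (N:ℝ))]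
        rw [habs]; ring
      rw [hqq]
  have hsummu : Summable (fun j : ℤ => ‖(if j = 0 then 0 else fourierCoeff (⇑g) (j * N))‖) :=
    Summable.of_nonneg_of_le (fun j => norm_nonneg _) hnorm_le hvsum.summable
  -- final computation
  rw [hval]
  have hrw : fourierCoeff (⇑g) 0 - Q = -(Q - fourierCoeff (⇑g) 0) := by ring
  rw [hrw, norm_neg, ← hQ5.tsum_eq]
  calc ‖∑' j : ℤ, (if j = 0 then 0 else fourierCoeff (⇑g) (j * N))‖
      ≤ ∑' j : ℤ, ‖(if j = 0 then 0 else fourierCoeff (⇑g) (j * N))‖ :=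
        norm_tsum_le_tsum_norm hsummu
    _ ≤ ∑' j : ℤ, v j := Summable.tsum_le_tsum hnorm_le hsummu hvsum.summable
    _ = A * q / (1 - q) + A * q / (1 - q) := hvsum.tsum_eq
    _ ≤ 2 * A / (Real.exp (a * N) - 1) := by
        have hE1 : (1:ℝ) < Real.exp (a * N) := by
          rw [show (1:ℝ) = Real.exp 0 by simp]
          exact Real.exp_lt_exp.mpr haN
        have hqE : q = (Real.exp (a * N))⁻¹ := by rw [hqdef, Real.exp_neg]
        apply le_of_eq
        rw [hqE]
        have hE0 : Real.exp (a * N) ≠ 0 := (Real.exp_pos _).ne'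
        have hEm1 : Real.exp (a * N) - 1 ≠ 0 := by linarith
        field_simp
        ring



theorem stmt_3 {X : Type*} [NormedAddCommGroup X] [NormedSpace ℂ X] [CompleteSpace X]
    (F : ℂ → X) (a A : ℝ) (ha : 0 < a)
    (hper : ∀ x : ℝ, F (x + 1) = F x)
    (han : DifferentiableOn ℂ F {z : ℂ | -a < z.im ∧ z.im < a})
    (hbd : ∀ z ∈ {z : ℂ | -a < z.im ∧ z.im < a}, ‖F z‖ ≤ A)
    (N : ℕ) (hN : 0 < N) :
    ‖(∫ x in (0:ℝ)..1, F x) - (N : ℂ)⁻¹ • ∑ k ∈ Finset.range N, F ((k : ℝ) / N)‖ ≤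
      2 * A / (Real.exp (a * N) - 1) := by
  set S := {z : ℂ | -a < z.im ∧ z.im < a} with hSdef
  have hSo : IsOpen S := by
    have : S = Complex.im ⁻¹' Set.Ioo (-a) a := rfl
    rw [this]; exact isOpen_Ioo.preimage Complex.continuous_im
  have hmemS : ∀ x : ℝ, (x : ℂ) ∈ S := fun x => by simp [hSdef, ha]
  have hA : 0 ≤ A := le_trans (norm_nonneg _) (hbd 0 (by simpa using hmemS 0))
  have hE1 : (1:ℝ) < Real.exp (a * N) := by
    rw [show (1:ℝ) = Real.exp 0 by simp]
    exact Real.exp_lt_exp.mpr (by positivity)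
  have hM : (0:ℝ) ≤ 2 * A / (Real.exp (a * N) - 1) :=
    div_nonneg (by linarith) (by linarith)
  apply NormedSpace.norm_le_dual_bound ℂ _ hM
  intro φ
  -- interval integrability of F
  have hcont : Continuous fun x : ℝ => F x := by
    rw [continuous_iff_continuousAt]
    intro x
    exact ((han.differentiableAt (hSo.mem_nhds (hmemS x))).continuousAt).comp
      Complex.continuous_ofReal.continuousAt
  have hFint : IntervalIntegrable (fun x : ℝ => F x) MeasureTheory.volume 0 1 :=
    hcont.intervalIntegrable 0 1
  have hmap : φ ((∫ x in (0:ℝ)..1, F x) - (N : ℂ)⁻¹ • ∑ k ∈ Finset.range N, F ((k : ℝ) / N))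
      = (∫ x in (0:ℝ)..1, φ (F x)) - (N : ℂ)⁻¹ • ∑ k ∈ Finset.range N, φ (F ((k : ℝ) / N)) := by
    rw [map_sub, _root_.map_smul, map_sum, φ.intervalIntegral_comp_comm hFint]
  rw [hmap]
  have hkey := key (fun z => φ (F z)) a (A * ‖φ‖) ha
    (fun x => by rw [hper x])
    (φ.differentiable.comp_differentiableOn han)
    (fun z hz => by
      calc ‖φ (F z)‖ ≤ ‖φ‖ * ‖F z‖ := φ.le_opNorm _
        _ ≤ ‖φ‖ * A := mul_le_mul_of_nonneg_left (hbd z hz) (norm_nonneg _)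
        _ = A * ‖φ‖ := by ring)
    N hN
  calc ‖(∫ x in (0:ℝ)..1, φ (F x)) - (N : ℂ)⁻¹ • ∑ k ∈ Finset.range N, φ (F ((k : ℝ) / N))‖
      ≤ 2 * (A * ‖φ‖) / (Real.exp (a * N) - 1) := hkey
    _ = 2 * A / (Real.exp (a * N) - 1) * ‖φ‖ := by ring
end

section
/- For all natural numbers m > M ≥ 1, one has (m+M)! / ((m−M−1)! · (m−1)^{2M+1}) ≤ 6. -/
lemma factA : ∀ (M k : ℕ), Nat.factorial (k + (2*M+1)) ≤ Nat.factorial k * (k+M+1)^(2*M+1) := by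
  intro M
  induction M with
  | zero =>
    intro k
    simp [Nat.factorial_succ, mul_comm]
  | succ M ih =>
    intro k
    have h1 := ih (k+1)
    calc Nat.factorial (k + (2*(M+1)+1))
        = (k+2*M+3) * Nat.factorial ((k+1)+(2*M+1)) := by
          rw [show k + (2*(M+1)+1) = ((k+1)+(2*M+1))+1 from by ring, Nat.factorial_succ]
          congr 1
          omega
      _ ≤ (k+2*M+3) * (Nat.factorial (k+1) * (k+1+M+1)^(2*M+1)) := Nat.mul_le_mul_left _ h1
      _ = ((k+2*M+3)*(k+1)) * (Nat.factorial k * (k+M+2)^(2*M+1)) := by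
          rw [Nat.factorial_succ]
          ring_nf
      _ ≤ ((k+M+2)*(k+M+2)) * (Nat.factorial k * (k+M+2)^(2*M+1)) := by
          have h2 : (k+2*M+3)*(k+1) ≤ (k+M+2)*(k+M+2) := by nlinarith
          exact Nat.mul_le_mul_right _ h2
      _ = Nat.factorial k * (k+(M+1)+1)^(2*(M+1)+1) := by
          rw [show 2*(M+1)+1 = (2*M+1)+2 from by ring, pow_add]
          ring_nf

lemma pow_bound (m n : ℕ) (hm : 2 ≤ m) (h : 6*n ≤ 5*m) : (m:ℝ)^n ≤ 6*((m:ℝ)-1)^n := by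
  have hm0 : (0:ℝ) < m := by positivity
  have hm0' : (2:ℝ) ≤ m := by exact_mod_cast hm
  have hx : (-2:ℝ) ≤ -(1/(m:ℝ)) := by
    have : (1:ℝ)/m ≤ 1/2 := by
      rw [div_le_div_iff₀ hm0 (by norm_num)]; linarith
    linarith
  have hb := one_add_mul_le_pow hx n
  have hnm : (n:ℝ)*(1/m) ≤ 5/6 := by
    rw [mul_one_div, div_le_div_iff₀ hm0 (by norm_num)]
    have : (6:ℝ)*n ≤ 5*m := by exact_mod_cast h
    linarith
  have h16 : (1:ℝ)/6 ≤ (1 - 1/(m:ℝ))^n := by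
    calc (1:ℝ)/6 ≤ 1 + (n:ℝ)*(-(1/m)) := by nlinarith
      _ ≤ (1 + -(1/(m:ℝ)))^n := hb
      _ = (1 - 1/(m:ℝ))^n := by ring_nf
  have keyeq : ((m:ℝ)-1)^n = (1-1/(m:ℝ))^n * (m:ℝ)^n := by
    rw [← mul_pow]
    congr 1
    field_simp
  calc (m:ℝ)^n = 6*((1/6) * (m:ℝ)^n) := by ring
    _ ≤ 6*((1-1/(m:ℝ))^n * (m:ℝ)^n) := by
        have hmn : (0:ℝ) ≤ (m:ℝ)^n := by positivity
        nlinarith [mul_le_mul_of_nonneg_right h16 hmn]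
    _ = 6*((m:ℝ)-1)^n := by rw [keyeq]

lemma key_s5 : ∀ M : ℕ, ∀ m : ℕ, 1 ≤ M → M < m →
    Nat.factorial (m+M) ≤ 6 * Nat.factorial (m-M-1) * (m-1)^(2*M+1) := by
  intro M
  induction M using Nat.strong_induction_on with
  | _ M ih =>
  intro m hM hmM
  by_cases hA : 12*M+6 ≤ 5*m
  · -- AM-GM + Bernoulli
    obtain ⟨k, rfl⟩ : ∃ k, m = M+1+k := ⟨m-M-1, by omega⟩
    have h1 := factA M k
    have h2 : (M+1+k)^(2*M+1) ≤ 6 * (M+k)^(2*M+1) := by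
      have hr := pow_bound (M+1+k) (2*M+1) (by omega) (by omega)
      have : ((M+1+k:ℕ):ℝ)^(2*M+1) ≤ 6*(((M+k:ℕ)):ℝ)^(2*M+1) := by
        convert hr using 3
        push_cast; ring
      exact_mod_cast this
    have hsub1 : M+1+k-M-1 = k := by omega
    have hsub2 : M+1+k-1 = M+k := by omega
    rw [hsub1, hsub2]
    calc Nat.factorial (M+1+k+M) = Nat.factorial (k+(2*M+1)) := by ring_nf
      _ ≤ Nat.factorial k * (k+M+1)^(2*M+1) := h1
      _ ≤ Nat.factorial k * (6*(M+k)^(2*M+1)) :=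
          Nat.mul_le_mul_left _ (by rw [show k+M+1 = M+1+k from by ring]; exact h2)
      _ = 6 * Nat.factorial k * (M+k)^(2*M+1) := by ring
  · by_cases hM4 : M ≤ 4
    · -- small cases: m ≤ 10
      have hm10 : m ≤ 10 := by omega
      have hm2 : 2 ≤ m := by omega
      interval_cases M <;> interval_cases m <;> decide
    · -- M ≥ 5: descend
      obtain ⟨N, rfl⟩ : ∃ N, M = N+1 := ⟨M-1, by omega⟩
      obtain ⟨k, rfl⟩ : ∃ k, m = N+2+k := ⟨m-N-2, by omega⟩
      have hIH := ih N (by omega) (N+2+k) (by omega) (by omega)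
      have e1 : N+2+k-N-1 = k+1 := by omega
      have e2 : N+2+k-(N+1)-1 = k := by omega
      have e3 : N+2+k-1 = N+k+1 := by omega
      rw [e1, e3] at hIH
      rw [e2, e3]
      have hk : 5*k ≤ 7*N+7 := by omega
      have hN : 4 ≤ N := by omega
      have step : (k+1)*(2*N+3+k) ≤ (N+k+1)*(N+k+1) := by nlinarith
      calc Nat.factorial (N+2+k+(N+1)) = (2*N+3+k) * Nat.factorial (N+2+k+N) := by
            rw [show N+2+k+(N+1) = (N+2+k+N)+1 from by ring, Nat.factorial_succ]
            congr 1; omega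
        _ ≤ (2*N+3+k) * (6 * Nat.factorial (k+1) * (N+k+1)^(2*N+1)) :=
            Nat.mul_le_mul_left _ hIH
        _ = ((k+1)*(2*N+3+k)) * (6 * Nat.factorial k * (N+k+1)^(2*N+1)) := by
            rw [Nat.factorial_succ]; ring
        _ ≤ ((N+k+1)*(N+k+1)) * (6 * Nat.factorial k * (N+k+1)^(2*N+1)) :=
            Nat.mul_le_mul_right _ step
        _ = 6 * Nat.factorial k * (N+k+1)^(2*(N+1)+1) := by
            rw [show 2*(N+1)+1 = (2*N+1)+2 from by ring, pow_add]; ring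

theorem stmt_5 (m M : ℕ) (hM : 1 ≤ M) (hmM : M < m) :
    (Nat.factorial (m + M) : ℝ) /
      ((Nat.factorial (m - M - 1) : ℝ) * ((m : ℝ) - 1) ^ (2 * M + 1)) ≤ 6 := by
  have hm2 : 2 ≤ m := by omega
  have hm1 : (1:ℝ) ≤ (m:ℝ) - 1 := by
    have : (2:ℝ) ≤ m := by exact_mod_cast hm2
    linarith
  have hD : (0:ℝ) < (Nat.factorial (m - M - 1) : ℝ) * ((m : ℝ) - 1) ^ (2 * M + 1) := by
    have h1 : (0:ℝ) < (Nat.factorial (m - M - 1) : ℝ) := by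
      exact_mod_cast (m - M - 1).factorial_pos
    have h2 : (0:ℝ) < ((m : ℝ) - 1) ^ (2 * M + 1) := by positivity
    exact mul_pos h1 h2
  rw [div_le_iff₀ hD]
  have hkey := key_s5 M m hM hmM
  have hcast : ((Nat.factorial (m+M) : ℕ) : ℝ) ≤
      ((6 * Nat.factorial (m-M-1) * (m-1)^(2*M+1) : ℕ) : ℝ) := by exact_mod_cast hkey
  have hms : ((m - 1 : ℕ) : ℝ) = (m:ℝ) - 1 := by
    have : 1 ≤ m := by omega
    push_cast [this]
    ring
  push_cast at hcast
  rw [hms] at hcast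
  linarith
end

section
/- Let X be a real or complex Banach space and suppose a quadrature rule S with M nodes ξ₁,…,ξ_M ∈ [−1,1] and weights ω₁,…,ω_M is exact for the discrete sum, i.e. (2/m)Σ_{j=0}^{m−1} p(x_j) = Σ_{k=1}^M ω_k p(ξ_k) for every polynomial p of degree ≤ 2M−1, where x_j = −1 + 2j/(m−1). If F : [−1,1] → X is 2M-times differentiable with ‖F^{(2M)}‖ ≤ A and Σ_{j=0}^{m−1} q(x_j)² ≤ B where q(x) = ∏_{k=1}^M (x − ξ_k), then ‖(2/m)Σ_{j=0}^{m−1} F(x_j) − Σ_{k=1}^M ω_k F(ξ_k)‖ ≤ (2A/m)·B/(2M)!. -/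
open MeasureTheory intervalIntegral Set Finset

noncomputable def GG (a : ℝ) (j : ℕ) (u : ℝ → ℝ) : ℝ → ℝ :=
  fun x => ∫ s in (0:ℝ)..1, s ^ j * u (a + s * (x - a))

lemma GG_hasDerivAt {u : ℝ → ℝ} (hu : ContDiff ℝ 1 u) (a : ℝ) (j : ℕ) (x₀ : ℝ) :
    HasDerivAt (GG a j u) (GG a (j + 1) (deriv u) x₀) x₀ := by
  have hdu : Continuous (deriv u) := hu.continuous_deriv le_rfl
  obtain ⟨C, hC⟩ : ∃ C, ∀ y ∈ Icc (a - (|x₀ - a| + 1)) (a + (|x₀ - a| + 1)), |deriv u y| ≤ C :=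
    isCompact_Icc.exists_bound_of_continuousOn hdu.continuousOn |>.imp
      (fun C hC y hy => by simpa using hC y hy)
  have key := intervalIntegral.hasDerivAt_integral_of_dominated_loc_of_deriv_le
    (F := fun x s => s ^ j * u (a + s * (x - a)))
    (F' := fun x s => s ^ (j + 1) * deriv u (a + s * (x - a)))
    (x₀ := x₀) (a := (0:ℝ)) (b := 1) (μ := volume)
    (bound := fun _ => |C|) (s := Metric.ball x₀ 1) (Metric.ball_mem_nhds x₀ one_pos)
    ?_ ?_ ?_ ?_ ?_ ?_
  · exact key.2
  · filter_upwards with x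
    exact (Continuous.mul (by fun_prop) (hu.continuous.comp (by fun_prop))).aestronglyMeasurable
  · exact (Continuous.mul (by fun_prop) (hu.continuous.comp (by fun_prop))).intervalIntegrable _ _
  · exact (Continuous.mul (by fun_prop) (hdu.comp (by fun_prop))).aestronglyMeasurable
  · filter_upwards with s hs x hx
    have hs' : s ∈ Icc (0:ℝ) 1 := by
      rcases hs with ⟨h1, h2⟩
      constructor <;> simp_all [uIoc_of_le (zero_le_one (α := ℝ))] <;> linarith [h1, h2]
    have hmem : a + s * (x - a) ∈ Icc (a - (|x₀ - a| + 1)) (a + (|x₀ - a| + 1)) := by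
      simp only [Metric.mem_ball, Real.dist_eq] at hx
      have htri : |x - a| ≤ |x - x₀| + |x₀ - a| := abs_sub_le x x₀ a
      have h3 : |s * (x - a)| ≤ |x₀ - a| + 1 := by
        rw [abs_mul, abs_of_nonneg hs'.1]
        nlinarith [abs_nonneg (x - a), hs'.2]
      obtain ⟨h4, h5⟩ := abs_le.1 h3
      constructor <;> simp <;> linarith
    have : |s ^ (j+1) * deriv u (a + s * (x - a))| ≤ |C| := by
      rw [abs_mul]
      have h1 : |s ^ (j+1)| ≤ 1 := by
        rw [abs_pow]; exact pow_le_one₀ (abs_nonneg s) (abs_le.2 ⟨by linarith [hs'.1], hs'.2⟩)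
      have h2 : |deriv u (a + s * (x - a))| ≤ |C| :=
        le_trans (hC _ hmem) (le_abs_self C)
      calc |s^(j+1)| * |deriv u (a + s*(x-a))| ≤ 1 * |C| :=
            mul_le_mul h1 h2 (abs_nonneg _) zero_le_one
        _ = |C| := one_mul _
    simpa [Real.norm_eq_abs, abs_mul, abs_pow] using this
  · exact intervalIntegrable_const
  · filter_upwards with s hs x hx
    have hinner : HasDerivAt (fun y => a + s * (y - a)) s x := by
      simpa using (((hasDerivAt_id x).sub_const a).const_mul s).const_add a
    have houter : HasDerivAt u (deriv u (a + s * (x - a))) (a + s * (x - a)) :=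
      (hu.differentiable one_ne_zero _).hasDerivAt
    have := (houter.comp x hinner).const_mul (s ^ j)
    exact this.congr_deriv (by ring)

lemma GG_continuous {u : ℝ → ℝ} (hu : Continuous u) (a : ℝ) (j : ℕ) :
    Continuous (GG a j u) := by
  rw [continuous_iff_continuousAt]
  intro x₀
  obtain ⟨C, hC⟩ : ∃ C, ∀ y ∈ Icc (a - (|x₀ - a| + 1)) (a + (|x₀ - a| + 1)), |u y| ≤ C :=
    isCompact_Icc.exists_bound_of_continuousOn hu.continuousOn |>.imp
      (fun C hC y hy => by simpa using hC y hy)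
  apply intervalIntegral.continuousAt_of_dominated_interval (bound := fun _ => |C|)
  · filter_upwards with x
    exact (Continuous.mul (by fun_prop) (hu.comp (by fun_prop))).aestronglyMeasurable
  · filter_upwards [Metric.ball_mem_nhds x₀ one_pos] with x hx
    filter_upwards with s hs
    have hs' : s ∈ Icc (0:ℝ) 1 := by
      rcases hs with ⟨h1, h2⟩
      constructor <;> simp_all [uIoc_of_le (zero_le_one (α := ℝ))] <;> linarith [h1, h2]
    simp only [Metric.mem_ball, Real.dist_eq] at hx
    have htri : |x - a| ≤ |x - x₀| + |x₀ - a| := abs_sub_le x x₀ a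
    have h3 : |s * (x - a)| ≤ |x₀ - a| + 1 := by
      rw [abs_mul, abs_of_nonneg hs'.1]
      nlinarith [abs_nonneg (x - a), hs'.2]
    obtain ⟨h4, h5⟩ := abs_le.1 h3
    have hmem : a + s * (x - a) ∈ Icc (a - (|x₀ - a| + 1)) (a + (|x₀ - a| + 1)) := by
      constructor <;> simp <;> linarith
    have h1 : |s ^ j| ≤ 1 := by
      rw [abs_pow]; exact pow_le_one₀ (abs_nonneg s) (abs_le.2 ⟨by linarith [hs'.1], hs'.2⟩)
    have h2 : |u (a + s * (x - a))| ≤ |C| := le_trans (hC _ hmem) (le_abs_self C)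
    calc ‖s ^ j * u (a + s * (x - a))‖ = |s ^ j| * |u (a + s * (x - a))| := by
          simp [Real.norm_eq_abs, abs_mul]
      _ ≤ 1 * |C| := mul_le_mul h1 h2 (abs_nonneg _) zero_le_one
      _ = |C| := one_mul _
  · exact intervalIntegrable_const
  · filter_upwards with s hs
    exact (continuous_const.mul (hu.comp (by fun_prop))).continuousAt

lemma GG_deriv {u : ℝ → ℝ} (hu : ContDiff ℝ 1 u) (a : ℝ) (j : ℕ) :
    deriv (GG a j u) = GG a (j + 1) (deriv u) :=
  funext fun x => (GG_hasDerivAt hu a j x).deriv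

lemma GG_contDiff : ∀ (r : ℕ) {u : ℝ → ℝ}, ContDiff ℝ r u → ∀ (a : ℝ) (j : ℕ),
    ContDiff ℝ r (GG a j u) := by
  intro r
  induction r with
  | zero => intro u hu a j; exact contDiff_zero.2 (GG_continuous (contDiff_zero.1 hu) a j)
  | succ r ih =>
    intro u hu a j
    have hu' : ContDiff ℝ (r + 1 : ℕ) u := hu
    rw [show ((r + 1 : ℕ) : WithTop ℕ∞) = (r : WithTop ℕ∞) + 1 by push_cast; ring] at hu' ⊢
    rw [contDiff_succ_iff_deriv] at hu' ⊢
    refine ⟨fun x => (GG_hasDerivAt (hu.of_le (by exact_mod_cast Nat.one_le_iff_ne_zero.2 (Nat.succ_ne_zero r))) a j x).differentiableAt, by simp, ?_⟩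
    rw [GG_deriv (hu.of_le (by exact_mod_cast Nat.one_le_iff_ne_zero.2 (Nat.succ_ne_zero r))) a j]
    exact ih hu'.2.2 a (j + 1)

lemma GG_iteratedDeriv : ∀ (i : ℕ) {u : ℝ → ℝ}, ContDiff ℝ i u → ∀ (a : ℝ) (j : ℕ),
    iteratedDeriv i (GG a j u) = GG a (j + i) (iteratedDeriv i u) := by
  intro i
  induction i with
  | zero => intro u hu a j; simp [iteratedDeriv_zero]
  | succ i ih =>
    intro u hu a j
    have h1 : ContDiff ℝ 1 u := hu.of_le (by exact_mod_cast Nat.one_le_iff_ne_zero.2 (Nat.succ_ne_zero i))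
    have hu' : ContDiff ℝ (i + 1 : ℕ) u := hu
    rw [show ((i + 1 : ℕ) : WithTop ℕ∞) = (i : WithTop ℕ∞) + 1 by push_cast; ring] at hu'
    rw [contDiff_succ_iff_deriv] at hu'
    rw [iteratedDeriv_succ', GG_deriv h1 a j, ih hu'.2.2 a (j + 1), iteratedDeriv_succ',
      show j + 1 + i = j + (i + 1) by omega]

lemma GG_bound {u : ℝ → ℝ} (hu : Continuous u) {a x : ℝ} (ha : a ∈ Icc (-1:ℝ) 1)
    (hx : x ∈ Icc (-1:ℝ) 1) {C : ℝ} (hC : ∀ t ∈ Icc (-1:ℝ) 1, |u t| ≤ C) (j : ℕ) :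
    |GG a j u x| ≤ C / (j + 1) := by
  obtain ⟨ha1, ha2⟩ := ha; obtain ⟨hx1, hx2⟩ := hx
  have hmem : ∀ s ∈ Icc (0:ℝ) 1, a + s * (x - a) ∈ Icc (-1:ℝ) 1 := by
    intro s ⟨hs1, hs2⟩
    constructor <;> nlinarith
  have hint1 : IntervalIntegrable (fun s => |s ^ j * u (a + s * (x - a))|) volume 0 1 :=
    ((Continuous.mul (by fun_prop) (hu.comp (by fun_prop))).abs).intervalIntegrable _ _
  have hint2 : IntervalIntegrable (fun s : ℝ => C * s ^ j) volume 0 1 :=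
    (Continuous.mul continuous_const (by fun_prop)).intervalIntegrable _ _
  calc |GG a j u x| ≤ ∫ s in (0:ℝ)..1, |s ^ j * u (a + s * (x - a))| :=
        intervalIntegral.abs_integral_le_integral_abs zero_le_one
    _ ≤ ∫ s in (0:ℝ)..1, C * s ^ j := by
        apply intervalIntegral.integral_mono_on zero_le_one hint1 hint2
        intro s hs
        have h1 : |s ^ j| = s ^ j := abs_of_nonneg (pow_nonneg hs.1 j)
        have h2 : |u (a + s * (x - a))| ≤ C := hC _ (hmem s hs)
        rw [abs_mul, h1]
        have : s ^ j * |u (a + s * (x - a))| ≤ s ^ j * C :=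
          mul_le_mul_of_nonneg_left h2 (pow_nonneg hs.1 j)
        linarith
    _ = C / (j + 1) := by
        rw [intervalIntegral.integral_const_mul, integral_pow]
        rw [one_pow, zero_pow (Nat.succ_ne_zero j)]
        push_cast
        ring
  
lemma GG_newton {f : ℝ → ℝ} (hf : ContDiff ℝ 1 f) (a x : ℝ) :
    f x = f a + (x - a) * GG a 0 (deriv f) x := by
  have hcont : Continuous (deriv f) := hf.continuous_deriv le_rfl
  have hftc : ∫ s in (0:ℝ)..1, deriv f (a + s * (x - a)) * (x - a) = f x - f a := by
    have := intervalIntegral.integral_eq_sub_of_hasDerivAt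
      (f := fun s : ℝ => f (a + s * (x - a)))
      (f' := fun s : ℝ => deriv f (a + s * (x - a)) * (x - a))
      (a := (0:ℝ)) (b := 1) ?_ ?_
    · rw [this]; norm_num
    · intro s _
      have hinner : HasDerivAt (fun s : ℝ => a + s * (x - a)) (x - a) s := by
        simpa using ((hasDerivAt_id s).mul_const (x - a)).const_add a
      exact ((hf.differentiable one_ne_zero _).hasDerivAt).comp s hinner
    · exact (Continuous.mul (hcont.comp (by fun_prop)) continuous_const).intervalIntegrable _ _
  have : (x - a) * GG a 0 (deriv f) x
      = ∫ s in (0:ℝ)..1, deriv f (a + s * (x - a)) * (x - a) := by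
    rw [show (fun s : ℝ => deriv f (a + s * (x - a)) * (x - a))
        = fun s : ℝ => (x - a) * (s ^ 0 * deriv f (a + s * (x - a))) by funext s; ring]
    rw [intervalIntegral.integral_const_mul]
    rfl
  rw [this, hftc]; ring

noncomputable def RR (t : ℕ → ℝ) (f : ℝ → ℝ) : ℕ → ℝ → ℝ
  | 0 => f
  | (l + 1) => GG (t l) 0 (deriv (RR t f l))

lemma RR_main (n : ℕ) (t : ℕ → ℝ) (ht : ∀ j, t j ∈ Icc (-1:ℝ) 1) {f : ℝ → ℝ}
    (hf : ContDiff ℝ n f) {A : ℝ}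
    (hA : ∀ x ∈ Icc (-1:ℝ) 1, |iteratedDeriv n f x| ≤ A) :
    ∀ l, l ≤ n → ContDiff ℝ ((n - l : ℕ)) (RR t f l) ∧
      (∀ x ∈ Icc (-1:ℝ) 1,
        |iteratedDeriv (n - l) (RR t f l) x| ≤ A * (Nat.factorial (n - l)) / (Nat.factorial n)) ∧
      (∀ x : ℝ, f x =
        (∑ i ∈ Finset.range l, RR t f i (t i) * ∏ j ∈ Finset.range i, (x - t j))
          + RR t f l x * ∏ j ∈ Finset.range l, (x - t j)) := by
  intro l
  induction l with
  | zero =>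
    intro _
    refine ⟨by simpa [RR] using hf, ?_, ?_⟩
    · intro x hx
      have := hA x hx
      rw [Nat.sub_zero]
      have hpos : (0:ℝ) < (Nat.factorial n : ℝ) := by positivity
      rw [show A * (Nat.factorial n : ℝ) / (Nat.factorial n : ℝ) = A by field_simp]
      simpa [RR] using this
    · intro x; simp [RR]
  | succ l ih =>
    intro hl1
    have hl : l < n := hl1
    obtain ⟨ha, hb, hc⟩ := ih hl.le
    obtain ⟨k', hk'⟩ : ∃ k', n - l = k' + 1 := ⟨n - l - 1, by omega⟩
    rw [hk'] at ha hb
    have hkk : n - (l + 1) = k' := by omega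
    have haux : ContDiff ℝ ((k' : ℕ) + 1) (RR t f l) := by
      rw [show (((k' : ℕ) : WithTop ℕ∞) + 1) = (((k' + 1 : ℕ)) : WithTop ℕ∞) by push_cast; ring]
      exact ha
    rw [contDiff_succ_iff_deriv] at haux
    have hdC : ContDiff ℝ ((k' : ℕ)) (deriv (RR t f l)) := haux.2.2
    have hC1 : ContDiff ℝ 1 (RR t f l) := by
      apply ha.of_le
      exact_mod_cast Nat.one_le_iff_ne_zero.2 (by omega)
    refine ⟨?_, ?_, ?_⟩
    · rw [hkk]
      exact GG_contDiff _ hdC _ _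
    · intro x hx
      rw [hkk]
      have heq : iteratedDeriv k' (RR t f (l + 1))
          = GG (t l) (0 + k') (iteratedDeriv k' (deriv (RR t f l))) := by
        show iteratedDeriv k' (GG (t l) 0 (deriv (RR t f l))) = _
        exact GG_iteratedDeriv _ hdC _ _
      have heq2 : iteratedDeriv k' (deriv (RR t f l)) = iteratedDeriv (k' + 1) (RR t f l) :=
        (iteratedDeriv_succ').symm
      rw [heq, heq2]
      have hcont : Continuous (iteratedDeriv (k' + 1) (RR t f l)) :=
        ha.continuous_iteratedDeriv (k' + 1) (le_refl _)
      have := GG_bound hcont (ht l) hx hb (0 + k')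
      refine le_trans this (le_of_eq ?_)
      rw [show (((0 + k' : ℕ)):ℝ) + 1 = ((k' : ℝ) + 1) by push_cast; ring,
        Nat.factorial_succ]
      have h1 : ((k' : ℝ)) + 1 ≠ 0 := by positivity
      have h2 : ((Nat.factorial n : ℝ)) ≠ 0 := by positivity
      push_cast
      field_simp
    · intro x
      have hnew := GG_newton hC1 (t l) x
      rw [Finset.sum_range_succ, Finset.prod_range_succ,
        show RR t f (l+1) x = GG (t l) 0 (deriv (RR t f l)) x from rfl, hc x, hnew]
      ring

lemma pair_prod (v : ℕ → ℝ) (y : ℝ) : ∀ (N : ℕ),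
    ∏ j ∈ Finset.range (2 * N), (y - v (j / 2)) = ∏ k ∈ Finset.range N, (y - v k) ^ 2 := by
  intro N
  induction N with
  | zero => simp
  | succ N ih =>
    rw [show 2 * (N + 1) = (2 * N + 1) + 1 by ring, Finset.prod_range_succ,
      Finset.prod_range_succ, ih, Finset.prod_range_succ,
      show (2 * N + 1) / 2 = N by omega, show (2 * N) / 2 = N by omega]
    ring

lemma scalar_quad (M m : ℕ) (hM : 1 ≤ M) (hm : 2 ≤ m)
    (ξ : Fin M → ℝ) (hξ : ∀ k, ξ k ∈ Set.Icc (-1 : ℝ) 1)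
    (ω : Fin M → ℝ)
    (x : ℕ → ℝ) (hx : ∀ j, x j = -1 + 2 * (j : ℝ) / ((m : ℝ) - 1))
    (hexact : ∀ p : Polynomial ℝ, p.degree ≤ (2 * M - 1 : ℕ) →
      (2 / (m : ℝ)) * ∑ j ∈ Finset.range m, p.eval (x j) =
        ∑ k, ω k * p.eval (ξ k))
    (f : ℝ → ℝ) (hf : ContDiff ℝ (2 * M) f)
    (A B : ℝ)
    (hA : ∀ t ∈ Set.Icc (-1 : ℝ) 1, |iteratedDeriv (2 * M) f t| ≤ A)
    (hB : ∑ j ∈ Finset.range m, (∏ k, (x j - ξ k)) ^ 2 ≤ B) :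
    |(2 / (m : ℝ)) * ∑ j ∈ Finset.range m, f (x j) - ∑ k, ω k * f (ξ k)| ≤
      2 * A / (m : ℝ) * B / (Nat.factorial (2 * M)) := by
  set n := 2 * M with hn
  set v : ℕ → ℝ := fun k => if h : k < M then ξ ⟨k, h⟩ else ξ ⟨0, hM⟩ with hv
  set t : ℕ → ℝ := fun j => v (j / 2) with htdef
  have ht : ∀ j, t j ∈ Set.Icc (-1:ℝ) 1 := by
    intro j
    simp only [htdef, hv]
    split <;> exact hξ _
  obtain ⟨_, hbound, hnewton⟩ := RR_main n t ht hf hA n le_rfl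
  set Q : ℝ → ℝ := fun y => ∏ j ∈ Finset.range n, (y - t j) with hQdef
  -- Q is the squared product
  have hQ : ∀ y, Q y = ∏ k : Fin M, (y - ξ k) ^ 2 := by
    intro y
    rw [hQdef]
    simp only [htdef]
    rw [hn, pair_prod v y M, ← Fin.prod_univ_eq_prod_range (fun k => (y - v k) ^ 2) M]
    apply Finset.prod_congr rfl
    intro k _
    simp [hv, k.isLt]
  have hQsq : ∀ y, Q y = (∏ k : Fin M, (y - ξ k)) ^ 2 := by
    intro y; rw [hQ y, ← Finset.prod_pow]
  have hQnonneg : ∀ y, 0 ≤ Q y := fun y => by rw [hQsq y]; positivity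
  -- the interpolating polynomial
  set H : Polynomial ℝ := ∑ i ∈ Finset.range n,
    Polynomial.C (RR t f i (t i)) * ∏ j ∈ Finset.range i,
      (Polynomial.X - Polynomial.C (t j)) with hHdef
  have hHeval : ∀ y, H.eval y
      = ∑ i ∈ Finset.range n, RR t f i (t i) * ∏ j ∈ Finset.range i, (y - t j) := by
    intro y
    rw [hHdef]
    simp [Polynomial.eval_finset_sum, Polynomial.eval_prod]
  have hHdeg : H.degree ≤ (2 * M - 1 : ℕ) := by
    rw [hHdef]
    refine le_trans (Polynomial.degree_sum_le _ _) ?_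
    apply Finset.sup_le
    intro i hi
    rw [Finset.mem_range] at hi
    refine le_trans (Polynomial.degree_mul_le _ _) ?_
    refine le_trans (add_le_add Polynomial.degree_C_le (Polynomial.degree_prod_le _ _)) ?_
    rw [zero_add]
    refine le_trans (Finset.sum_le_sum fun j _ => le_of_eq (Polynomial.degree_X_sub_C (t j))) ?_
    rw [Finset.sum_const, Finset.card_range]
    simp only [nsmul_eq_mul, mul_one]
    exact_mod_cast Nat.le_of_lt_succ (by omega : i < (2 * M - 1) + 1)
  -- decomposition
  have hfH : ∀ y, f y = H.eval y + RR t f n y * Q y := by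
    intro y
    rw [hHeval y, hQdef]
    exact hnewton y
  -- interpolation at the nodes
  have hinterp : ∀ k : Fin M, f (ξ k) = H.eval (ξ k) := by
    intro k
    have hQ0 : Q (ξ k) = 0 := by
      rw [hQ]
      apply Finset.prod_eq_zero (Finset.mem_univ k)
      simp
    rw [hfH (ξ k), hQ0]
    ring
  -- remainder bound
  have hA0 : 0 ≤ A := le_trans (abs_nonneg _) (hA 0 (by norm_num))
  have hxj : ∀ j ∈ Finset.range m, x j ∈ Set.Icc (-1:ℝ) 1 := by
    intro j hj
    rw [Finset.mem_range] at hj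
    have hm1 : (0:ℝ) < (m:ℝ) - 1 := by
      have : (2:ℝ) ≤ (m:ℝ) := by exact_mod_cast hm
      linarith
    have hjm : (j:ℝ) ≤ (m:ℝ) - 1 := by
      have : (j:ℝ) + 1 ≤ (m:ℝ) := by exact_mod_cast hj
      linarith
    have hj0 : (0:ℝ) ≤ (j:ℝ) := Nat.cast_nonneg j
    rw [hx j]
    constructor
    · have : 0 ≤ 2 * (j:ℝ) / ((m:ℝ) - 1) := by positivity
      linarith
    · have : 2 * (j:ℝ) / ((m:ℝ) - 1) ≤ 2 := by
        rw [div_le_iff₀ hm1]; linarith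
      linarith
  have hrem : ∀ j ∈ Finset.range m, |RR t f n (x j)| ≤ A / (Nat.factorial n) := by
    intro j hj
    have := hbound (x j) (hxj j hj)
    simpa [Nat.sub_self, iteratedDeriv_zero, Nat.factorial_zero] using this
  -- main computation
  have hm0 : (m:ℝ) ≠ 0 := by positivity
  have key : (2 / (m : ℝ)) * ∑ j ∈ Finset.range m, f (x j) - ∑ k, ω k * f (ξ k)
      = (2 / (m : ℝ)) * ∑ j ∈ Finset.range m, RR t f n (x j) * Q (x j) := by
    have e1 : ∑ k, ω k * f (ξ k) = ∑ k, ω k * H.eval (ξ k) :=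
      Finset.sum_congr rfl fun k _ => by rw [hinterp k]
    rw [e1, ← hexact H hHdeg, ← mul_sub, ← Finset.sum_sub_distrib]
    congr 1
    apply Finset.sum_congr rfl
    intro j _
    rw [hfH (x j)]
    ring
  rw [key]
  have h2m : (0:ℝ) ≤ 2 / (m:ℝ) := by positivity
  have hfact : (0:ℝ) < (Nat.factorial n : ℝ) := by positivity
  have step1 : |∑ j ∈ Finset.range m, RR t f n (x j) * Q (x j)|
      ≤ (A / (Nat.factorial n)) * B := by
    calc |∑ j ∈ Finset.range m, RR t f n (x j) * Q (x j)|
        ≤ ∑ j ∈ Finset.range m, |RR t f n (x j) * Q (x j)| :=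
          Finset.abs_sum_le_sum_abs _ _
      _ ≤ ∑ j ∈ Finset.range m, (A / (Nat.factorial n)) * Q (x j) := by
          apply Finset.sum_le_sum
          intro j hj
          rw [abs_mul, abs_of_nonneg (hQnonneg _)]
          exact mul_le_mul_of_nonneg_right (hrem j hj) (hQnonneg _)
      _ = (A / (Nat.factorial n)) * ∑ j ∈ Finset.range m, Q (x j) := by
          rw [← Finset.mul_sum]
      _ ≤ (A / (Nat.factorial n)) * B := by
          apply mul_le_mul_of_nonneg_left _ (by positivity)
          calc ∑ j ∈ Finset.range m, Q (x j)
              = ∑ j ∈ Finset.range m, (∏ k, (x j - ξ k)) ^ 2 :=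
                Finset.sum_congr rfl (fun j _ => hQsq _)
            _ ≤ B := hB
  calc |2 / (m:ℝ) * ∑ j ∈ Finset.range m, RR t f n (x j) * Q (x j)|
      = 2 / (m:ℝ) * |∑ j ∈ Finset.range m, RR t f n (x j) * Q (x j)| := by
        rw [abs_mul, abs_of_nonneg h2m]
    _ ≤ 2 / (m:ℝ) * ((A / (Nat.factorial n)) * B) :=
        mul_le_mul_of_nonneg_left step1 h2m
    _ = 2 * A / (m:ℝ) * B / (Nat.factorial n) := by
        field_simp

theorem stmt_16 {X : Type*} [NormedAddCommGroup X] [NormedSpace ℝ X]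
    (M m : ℕ) (hM : 1 ≤ M) (hm : 2 ≤ m)
    (ξ : Fin M → ℝ) (hξ : ∀ k, ξ k ∈ Set.Icc (-1 : ℝ) 1)
    (ω : Fin M → ℝ)
    (x : ℕ → ℝ) (hx : ∀ j, x j = -1 + 2 * (j : ℝ) / ((m : ℝ) - 1))
    (hexact : ∀ p : Polynomial ℝ, p.degree ≤ (2 * M - 1 : ℕ) →
      (2 / (m : ℝ)) * ∑ j ∈ Finset.range m, p.eval (x j) =
        ∑ k, ω k * p.eval (ξ k))
    (F : ℝ → X) (hF : ContDiff ℝ (2 * M) F)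
    (A B : ℝ)
    (hA : ∀ t ∈ Set.Icc (-1 : ℝ) 1, ‖iteratedDeriv (2 * M) F t‖ ≤ A)
    (hB : ∑ j ∈ Finset.range m, (∏ k, (x j - ξ k)) ^ 2 ≤ B) :
    ‖(2 / (m : ℝ)) • ∑ j ∈ Finset.range m, F (x j) - ∑ k, ω k • F (ξ k)‖ ≤
      2 * A / (m : ℝ) * B / (Nat.factorial (2 * M)) := by
  set E := (2 / (m : ℝ)) • ∑ j ∈ Finset.range m, F (x j) - ∑ k, ω k • F (ξ k) with hE
  obtain ⟨φ, hφ1, hφ2⟩ := exists_dual_vector'' ℝ E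
  set f : ℝ → ℝ := fun y => φ (F y) with hfdef
  have hfC : ContDiff ℝ (2 * M) f := φ.contDiff.comp hF
  have hAf : ∀ t ∈ Set.Icc (-1 : ℝ) 1, |iteratedDeriv (2 * M) f t| ≤ A := by
    intro t htm
    have hiter : iteratedDeriv (2 * M) f t = φ (iteratedDeriv (2 * M) F t) := by
      have h2 : iteratedFDeriv ℝ (2 * M) (⇑φ ∘ F) t
          = φ.compContinuousMultilinearMap (iteratedFDeriv ℝ (2 * M) F t) :=
        ContinuousLinearMap.iteratedFDeriv_comp_left φ hF.contDiffAt (x := t) (by norm_cast)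
      rw [iteratedDeriv_eq_iteratedFDeriv, show f = ⇑φ ∘ F from rfl, h2,
        iteratedDeriv_eq_iteratedFDeriv]
      rfl
    rw [hiter]
    calc |φ (iteratedDeriv (2 * M) F t)| ≤ ‖φ‖ * ‖iteratedDeriv (2 * M) F t‖ :=
          φ.le_opNorm _
      _ ≤ 1 * A := mul_le_mul hφ1 (hA t htm) (norm_nonneg _) zero_le_one
      _ = A := one_mul A
  have hsc := scalar_quad M m hM hm ξ hξ ω x hx hexact f hfC A B hAf hB
  have hφE : φ E = (2 / (m:ℝ)) * ∑ j ∈ Finset.range m, f (x j) - ∑ k, ω k * f (ξ k) := by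
    rw [hE, map_sub, _root_.map_smul, map_sum, map_sum]
    simp only [_root_.map_smul, smul_eq_mul, hfdef]
  have hφ2' : φ E = ‖E‖ := by exact_mod_cast hφ2
  rw [← hφ2', hφE]
  exact le_trans (le_abs_self _) hsc
end
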